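/- arXiv:2006.11461 — 4 statements merged into one kernel-verified Lean document; each statement's English description precedes it below -/
import Mathlib

section
/- Assume the bandwidth sequence satisfies h_n → 0 as n → ∞. If x₁ ≠ x₂ are two distinct points of ℝ^d at which the common density f is continuous, then n·h_n^d · Cov[f_n(x₁), f_n(x₂)] → 0 as n → ∞, where Cov[X, Y] = E[XY] − E[X]E[Y] denotes the covariance of the real random variables f_n(x₁) and f_n(x₂). -/
open MeasureTheory ProbabilityTheory Filter Real

section helpers

lemma gauss_integrable {d : ℕ} {b : ℝ} (hb : 0 < b) :
    Integrable (fun y : EuclideanSpace ℝ (Fin d) => rexp (-b * ‖y‖^2)) := by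
  have h := (GaussianFourier.integrable_cexp_neg_mul_sq_norm_add
      (V := EuclideanSpace ℝ (Fin d)) (b := (b:ℂ)) (by simpa using hb) 0 0).norm
  refine h.congr (Eventually.of_forall fun v => ?_)
  simp [Complex.norm_exp]
  exact Or.inl (by norm_cast)

lemma gauss_integrable' {d : ℕ} {b : ℝ} (hb : 0 < b) (x : EuclideanSpace ℝ (Fin d)) :
    Integrable (fun y : EuclideanSpace ℝ (Fin d) => rexp (-b * ‖x - y‖^2)) :=
  (integrable_comp_sub_left (fun y : EuclideanSpace ℝ (Fin d) => rexp (-b * ‖y‖^2)) x).mpr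
    (gauss_integrable hb)

lemma gauss_integral {d : ℕ} {b : ℝ} (hb : 0 < b) (x : EuclideanSpace ℝ (Fin d)) :
    ∫ y : EuclideanSpace ℝ (Fin d), rexp (-b * ‖x - y‖^2) = (π / b) ^ ((d:ℝ)/2) := by
  rw [integral_sub_left_eq_self (fun y : EuclideanSpace ℝ (Fin d) => rexp (-b * ‖y‖^2)) volume x,
    GaussianFourier.integral_rexp_neg_mul_sq_norm hb]
  norm_num [finrank_euclideanSpace_fin]

lemma gauss_integral_scaled {d : ℕ} {s t : ℝ} (hs : 0 < s) (ht : 0 < t)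
    (x : EuclideanSpace ℝ (Fin d)) :
    ∫ y : EuclideanSpace ℝ (Fin d), rexp (-(1/(s * t^2)) * ‖x - y‖^2)
      = (s * π) ^ ((d:ℝ)/2) * t ^ d := by
  rw [gauss_integral (by positivity) x]
  have h1 : π / (1/(s * t^2)) = (s * π) * t^2 := by field_simp
  have h2 : ((t:ℝ)^2) ^ ((d:ℝ)/2) = t ^ d := by
    rw [← Real.rpow_natCast t 2, ← Real.rpow_mul ht.le]
    norm_num
    rw [show (2:ℝ) * ((d:ℝ)/2) = (d:ℝ) by ring, Real.rpow_natCast]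
  rw [h1, Real.mul_rpow (by positivity) (by positivity), h2]

lemma sum_eval {n : ℕ} {A B : ℝ} :
    ∑ i ∈ Finset.range n, ∑ j ∈ Finset.range n, (if i = j then A else B)
      = n * A + ((n:ℝ)^2 - n) * B := by
  have key : ∀ i ∈ Finset.range n,
      ∑ j ∈ Finset.range n, (if i = j then A else B) = A - B + n * B := by
    intro i hi
    calc ∑ j ∈ Finset.range n, (if i = j then A else B)
        = ∑ j ∈ Finset.range n, ((if i = j then A - B else 0) + B) :=
          Finset.sum_congr rfl (fun j _ => by split <;> ring)
      _ = (∑ j ∈ Finset.range n, if i = j then A - B else 0) + n * B := by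
          rw [Finset.sum_add_distrib, Finset.sum_const, Finset.card_range, nsmul_eq_mul]
      _ = A - B + n * B := by rw [Finset.sum_ite_eq]; simp [hi]
  rw [Finset.sum_congr rfl key, Finset.sum_const, Finset.card_range, nsmul_eq_mul]
  ring

end helpers

namespace KDEAux

noncomputable def phi {d : ℕ} (cK : ℝ) (h : ℕ → ℝ) (x : EuclideanSpace ℝ (Fin d)) (n : ℕ)
    (y : EuclideanSpace ℝ (Fin d)) : ℝ := cK * rexp (-(1/(2 * h n ^ 2)) * ‖x - y‖ ^ 2)

variable {d : ℕ} {cK : ℝ} {h : ℕ → ℝ} {n : ℕ} {x y : EuclideanSpace ℝ (Fin d)}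

lemma phi_cont (x : EuclideanSpace ℝ (Fin d)) (n : ℕ) : Continuous (phi cK h x n) := by
  unfold phi; fun_prop

lemma phi_nonneg (hcK : 0 ≤ cK) : 0 ≤ phi cK h x n y :=
  mul_nonneg hcK (exp_nonneg _)

lemma phi_le (hcK : 0 ≤ cK) : phi cK h x n y ≤ cK := by
  unfold phi
  refine mul_le_of_le_one_right hcK (Real.exp_le_one_iff.mpr ?_)
  have h1 : (0:ℝ) ≤ (1/(2 * h n ^ 2)) * ‖x - y‖ ^ 2 := by positivity
  linarith

lemma phi_integrable (hh : 0 < h n) (x : EuclideanSpace ℝ (Fin d)) :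
    Integrable (phi cK h x n) :=
  ((gauss_integrable' (b := 1/(2 * h n ^ 2)) (by positivity) x).const_mul cK)

lemma phi_integral (hh : 0 < h n) (x : EuclideanSpace ℝ (Fin d)) :
    ∫ y, phi cK h x n y = cK * ((2 * π) ^ ((d:ℝ)/2) * h n ^ d) := by
  unfold phi
  rw [MeasureTheory.integral_const_mul, gauss_integral_scaled (by norm_num) hh x]

lemma phi_mul_le (hcK : 0 ≤ cK) (hh : 0 < h n) (x₁ x₂ y : EuclideanSpace ℝ (Fin d)) :
    phi cK h x₁ n y * phi cK h x₂ n y ≤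
      (cK * rexp (-(‖x₁ - x₂‖^2) * (1/(8 * h n ^ 2))))
        * (cK * rexp (-(1/(4 * h n ^ 2)) * ‖x₁ - y‖ ^ 2)) := by
  unfold phi
  rw [mul_mul_mul_comm, ← Real.exp_add, mul_mul_mul_comm, ← Real.exp_add]
  refine mul_le_mul_of_nonneg_left (Real.exp_le_exp.mpr ?_) (by positivity)
  have hst : ‖x₁ - x₂‖ ≤ ‖x₁ - y‖ + ‖x₂ - y‖ := by
    have h1 := dist_triangle x₁ y x₂
    simp only [dist_eq_norm] at h1
    calc ‖x₁ - x₂‖ ≤ ‖x₁ - y‖ + ‖y - x₂‖ := h1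
      _ = ‖x₁ - y‖ + ‖x₂ - y‖ := by rw [norm_sub_rev y x₂]
  set s := ‖x₁ - y‖
  set t := ‖x₂ - y‖
  set Δ := ‖x₁ - x₂‖
  have hd2 : Δ^2 ≤ 2*s^2 + 4*t^2 := by
    have h1 : Δ^2 ≤ (s + t)^2 := by
      have := norm_nonneg (x₁ - x₂)
      nlinarith
    nlinarith [sq_nonneg (s - t), norm_nonneg (x₂ - y)]
  have key : -(Δ^2) * (1/(8 * h n ^2)) + -(1/(4 * h n ^2)) * s^2
      - (-(1/(2 * h n ^2)) * s^2 + -(1/(2 * h n ^2)) * t^2)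
      = (2*s^2 + 4*t^2 - Δ^2) / (8 * h n ^ 2) := by
    field_simp
    ring
  have h2 : (0:ℝ) ≤ (2*s^2 + 4*t^2 - Δ^2) / (8 * h n ^ 2) :=
    div_nonneg (by linarith) (by positivity)
  linarith [key ▸ h2]

end KDEAux


/-- **Asymptotic uncorrelatedness of the kernel density estimator** (Lemma 2).
If the bandwidth sequence satisfies `h n → 0` and `x₁ ≠ x₂` are two distinct
continuity points of the common (bounded) density `f` of the i.i.d. samples,
then `n * h n ^ d * Cov[f_n(x₁), f_n(x₂)] → 0` as `n → ∞`. -/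
theorem kde_asymptotic_uncorrelatedness
    {d : ℕ} (hd : 1 ≤ d)
    {Ω : Type*} [MeasureSpace Ω] [IsProbabilityMeasure (ℙ : Measure Ω)]
    (X : ℕ → Ω → EuclideanSpace ℝ (Fin d))
    (hXmeas : ∀ i, Measurable (X i))
    (hXindep : iIndepFun X ℙ)
    (f : EuclideanSpace ℝ (Fin d) → ℝ)
    (hf_nonneg : ∀ y, 0 ≤ f y)
    (hf_bdd : ∃ C : ℝ, ∀ y, f y ≤ C)
    (hf_density : ∀ i, Measure.map (X i) ℙ
      = volume.withDensity (fun y => ENNReal.ofReal (f y)))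
    (x₁ x₂ : EuclideanSpace ℝ (Fin d))
    (hx_ne : x₁ ≠ x₂)
    (hf_cont₁ : ContinuousAt f x₁)
    (hf_cont₂ : ContinuousAt f x₂)
    (h : ℕ → ℝ)
    (h_pos : ∀ n, 0 < h n)
    (h_to_zero : Tendsto h atTop (nhds 0)) :
    letI K : EuclideanSpace ℝ (Fin d) → ℝ :=
      fun u => (2 * π) ^ (-(d : ℝ) / 2) * Real.exp (-‖u‖ ^ 2 / 2)
    letI fn : ℕ → EuclideanSpace ℝ (Fin d) → Ω → ℝ := fun n x ω =>
      (1 / ((n : ℝ) * h n ^ d)) * ∑ i ∈ Finset.range n, K ((h n)⁻¹ • (x - X i ω))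
    Tendsto
      (fun n : ℕ => (n : ℝ) * h n ^ d *
        ((∫ ω, fn n x₁ ω * fn n x₂ ω ∂ℙ)
          - (∫ ω, fn n x₁ ω ∂ℙ) * (∫ ω, fn n x₂ ω ∂ℙ)))
      atTop (nhds 0) := by
  classical
  show Tendsto
      (fun n : ℕ => (n : ℝ) * h n ^ d *
        ((∫ ω, ((1 / ((n : ℝ) * h n ^ d)) * ∑ i ∈ Finset.range n,
              ((2 * π) ^ (-(d : ℝ) / 2) * Real.exp (-‖(h n)⁻¹ • (x₁ - X i ω)‖ ^ 2 / 2))) *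
            ((1 / ((n : ℝ) * h n ^ d)) * ∑ i ∈ Finset.range n,
              ((2 * π) ^ (-(d : ℝ) / 2) * Real.exp (-‖(h n)⁻¹ • (x₂ - X i ω)‖ ^ 2 / 2))) ∂ℙ)
          - (∫ ω, (1 / ((n : ℝ) * h n ^ d)) * ∑ i ∈ Finset.range n,
              ((2 * π) ^ (-(d : ℝ) / 2) * Real.exp (-‖(h n)⁻¹ • (x₁ - X i ω)‖ ^ 2 / 2)) ∂ℙ)
            * (∫ ω, (1 / ((n : ℝ) * h n ^ d)) * ∑ i ∈ Finset.range n,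
              ((2 * π) ^ (-(d : ℝ) / 2) * Real.exp (-‖(h n)⁻¹ • (x₂ - X i ω)‖ ^ 2 / 2)) ∂ℙ)))
      atTop (nhds 0)
  obtain ⟨C, hC⟩ := hf_bdd
  have hC0 : 0 ≤ C := (hf_nonneg x₁).trans (hC x₁)
  set cK : ℝ := (2 * π) ^ (-(d : ℝ) / 2) with hcK
  have hcK_pos : 0 < cK := Real.rpow_pos_of_pos (by positivity) _
  have hrw : ∀ (n : ℕ) (x y : EuclideanSpace ℝ (Fin d)),
      cK * Real.exp (-‖(h n)⁻¹ • (x - y)‖ ^ 2 / 2) = KDEAux.phi cK h x n y := by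
    intro n x y
    have hhn := h_pos n
    unfold KDEAux.phi
    have hs : -(1/(2 * h n ^ 2)) * ‖x - y‖ ^ 2 = -‖(h n)⁻¹ • (x - y)‖ ^ 2 / 2 := by
      rw [norm_smul, Real.norm_eq_abs, abs_of_pos (inv_pos.mpr hhn), mul_pow, inv_pow]
      ring
    rw [hs]
  simp only [hrw]
  set ν : Measure (EuclideanSpace ℝ (Fin d)) :=
    volume.withDensity (fun y => ENNReal.ofReal (f y)) with hν
  have hν_le : ν ≤ (ENNReal.ofReal C) • (volume : Measure (EuclideanSpace ℝ (Fin d))) := by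
    refine Measure.le_iff.mpr fun s hs => ?_
    rw [hν, withDensity_apply _ hs, Measure.smul_apply, smul_eq_mul]
    calc ∫⁻ y in s, ENNReal.ofReal (f y) ∂volume
        ≤ ∫⁻ _ in s, ENNReal.ofReal C ∂volume :=
          lintegral_mono fun y => ENNReal.ofReal_le_ofReal (hC y)
      _ = ENNReal.ofReal C * volume s := by rw [setLIntegral_const]
  set A : ℕ → ℝ := fun n => ∫ y, KDEAux.phi cK h x₁ n y * KDEAux.phi cK h x₂ n y ∂ν with hA
  set B : ℕ → ℝ := fun n => ∫ y, KDEAux.phi cK h x₁ n y ∂ν with hB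
  set Cc : ℕ → ℝ := fun n => ∫ y, KDEAux.phi cK h x₂ n y ∂ν with hCc
  have hAdef : ∀ m : ℕ, A m = ∫ y, KDEAux.phi cK h x₁ m y * KDEAux.phi cK h x₂ m y ∂ν :=
    fun m => by rw [hA]
  have hBdef : ∀ m : ℕ, B m = ∫ y, KDEAux.phi cK h x₁ m y ∂ν := fun m => by rw [hB]
  have hCcdef : ∀ m : ℕ, Cc m = ∫ y, KDEAux.phi cK h x₂ m y ∂ν := fun m => by rw [hCc]
  -- integrability on Ω
  have hU_int : ∀ (n : ℕ) (x : EuclideanSpace ℝ (Fin d)) (i : ℕ),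
      Integrable (fun ω => KDEAux.phi cK h x n (X i ω)) ℙ := by
    intro n x i
    refine ⟨((KDEAux.phi_cont x n).measurable.comp (hXmeas i)).aestronglyMeasurable, ?_⟩
    refine HasFiniteIntegral.of_bounded (C := cK) (Eventually.of_forall fun ω => ?_)
    rw [Real.norm_eq_abs, abs_of_nonneg (KDEAux.phi_nonneg hcK_pos.le)]
    exact KDEAux.phi_le hcK_pos.le
  have hUV_int : ∀ (n i j : ℕ),
      Integrable (fun ω => KDEAux.phi cK h x₁ n (X i ω) * KDEAux.phi cK h x₂ n (X j ω)) ℙ := by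
    intro n i j
    refine ⟨(((KDEAux.phi_cont x₁ n).measurable.comp (hXmeas i)).mul
      ((KDEAux.phi_cont x₂ n).measurable.comp (hXmeas j))).aestronglyMeasurable, ?_⟩
    refine HasFiniteIntegral.of_bounded (C := cK * cK) (Eventually.of_forall fun ω => ?_)
    rw [Real.norm_eq_abs, abs_of_nonneg (mul_nonneg (KDEAux.phi_nonneg hcK_pos.le)
      (KDEAux.phi_nonneg hcK_pos.le))]
    exact mul_le_mul (KDEAux.phi_le hcK_pos.le) (KDEAux.phi_le hcK_pos.le)
      (KDEAux.phi_nonneg hcK_pos.le) hcK_pos.le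
  -- identical distribution
  have hone : ∀ (n : ℕ) (x : EuclideanSpace ℝ (Fin d)) (i : ℕ),
      ∫ ω, KDEAux.phi cK h x n (X i ω) ∂ℙ = ∫ y, KDEAux.phi cK h x n y ∂ν := by
    intro n x i
    have hmap := integral_map (μ := ℙ) (hXmeas i).aemeasurable
      (f := fun y => KDEAux.phi cK h x n y) (KDEAux.phi_cont x n).aestronglyMeasurable
    rw [hf_density i] at hmap
    exact hmap.symm
  have hTij : ∀ (n i j : ℕ),
      ∫ ω, KDEAux.phi cK h x₁ n (X i ω) * KDEAux.phi cK h x₂ n (X j ω) ∂ℙ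
        = if i = j then A n else B n * Cc n := by
    intro n i j
    by_cases hij : i = j
    · subst hij
      rw [if_pos rfl, hAdef n]
      have hc : Continuous (fun y => KDEAux.phi cK h x₁ n y * KDEAux.phi cK h x₂ n y) :=
        (KDEAux.phi_cont x₁ n).mul (KDEAux.phi_cont x₂ n)
      have hmap := integral_map (μ := ℙ) (hXmeas i).aemeasurable
        (f := fun y => KDEAux.phi cK h x₁ n y * KDEAux.phi cK h x₂ n y) hc.aestronglyMeasurable
      rw [hf_density i] at hmap
      exact hmap.symm
    · rw [if_neg hij]
      have hind : IndepFun (fun ω => KDEAux.phi cK h x₁ n (X i ω))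
          (fun ω => KDEAux.phi cK h x₂ n (X j ω)) ℙ :=
        (hXindep.indepFun hij).comp (KDEAux.phi_cont x₁ n).measurable
          (KDEAux.phi_cont x₂ n).measurable
      calc ∫ ω, KDEAux.phi cK h x₁ n (X i ω) * KDEAux.phi cK h x₂ n (X j ω) ∂ℙ
          = (∫ ω, KDEAux.phi cK h x₁ n (X i ω) ∂ℙ) * (∫ ω, KDEAux.phi cK h x₂ n (X j ω) ∂ℙ) :=
            hind.integral_fun_mul_eq_mul_integral (hU_int n x₁ i).aestronglyMeasurable
              (hU_int n x₂ j).aestronglyMeasurable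
        _ = B n * Cc n := by rw [hone n x₁ i, hone n x₂ j, ← hBdef n, ← hCcdef n]
  -- mean
  have hmean : ∀ (n : ℕ) (x : EuclideanSpace ℝ (Fin d)),
      ∫ ω, (1 / ((n : ℝ) * h n ^ d)) * ∑ i ∈ Finset.range n, KDEAux.phi cK h x n (X i ω) ∂ℙ
        = (1 / ((n : ℝ) * h n ^ d)) * ((n : ℝ) * ∫ y, KDEAux.phi cK h x n y ∂ν) := by
    intro n x
    rw [MeasureTheory.integral_const_mul]
    congr 1
    rw [integral_finset_sum _ (fun i _ => hU_int n x i),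
      Finset.sum_congr rfl (fun i _ => hone n x i), Finset.sum_const, Finset.card_range,
      nsmul_eq_mul]
  -- second moment
  have hsq : ∀ n : ℕ,
      ∫ ω, ((1 / ((n : ℝ) * h n ^ d)) * ∑ i ∈ Finset.range n, KDEAux.phi cK h x₁ n (X i ω)) *
           ((1 / ((n : ℝ) * h n ^ d)) * ∑ i ∈ Finset.range n, KDEAux.phi cK h x₂ n (X i ω)) ∂ℙ
        = (1 / ((n : ℝ) * h n ^ d))^2 * ((n : ℝ) * A n + ((n : ℝ)^2 - n) * (B n * Cc n)) := by
    intro n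
    have h1 : ∀ ω : Ω,
        ((1 / ((n : ℝ) * h n ^ d)) * ∑ i ∈ Finset.range n, KDEAux.phi cK h x₁ n (X i ω)) *
        ((1 / ((n : ℝ) * h n ^ d)) * ∑ i ∈ Finset.range n, KDEAux.phi cK h x₂ n (X i ω))
        = (1 / ((n : ℝ) * h n ^ d))^2 * ∑ i ∈ Finset.range n, ∑ j ∈ Finset.range n,
            KDEAux.phi cK h x₁ n (X i ω) * KDEAux.phi cK h x₂ n (X j ω) := by
      intro ω
      rw [mul_mul_mul_comm, Finset.sum_mul_sum]
      ring
    simp only [h1]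
    rw [MeasureTheory.integral_const_mul]
    congr 1
    rw [integral_finset_sum _ (fun i _ =>
      integrable_finset_sum _ (fun j _ => hUV_int n i j))]
    have h2 : ∀ i ∈ Finset.range n,
        ∫ ω, ∑ j ∈ Finset.range n,
            KDEAux.phi cK h x₁ n (X i ω) * KDEAux.phi cK h x₂ n (X j ω) ∂ℙ
          = ∑ j ∈ Finset.range n, (if i = j then A n else B n * Cc n) := by
      intro i _
      rw [integral_finset_sum _ (fun j _ => hUV_int n i j)]
      exact Finset.sum_congr rfl (fun j _ => hTij n i j)
    rw [Finset.sum_congr rfl h2, sum_eval]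
  -- the key identification for n ≥ 1
  have key : ∀ n : ℕ, 1 ≤ n →
      (n : ℝ) * h n ^ d *
        ((∫ ω, ((1 / ((n : ℝ) * h n ^ d)) * ∑ i ∈ Finset.range n, KDEAux.phi cK h x₁ n (X i ω)) *
            ((1 / ((n : ℝ) * h n ^ d)) * ∑ i ∈ Finset.range n, KDEAux.phi cK h x₂ n (X i ω)) ∂ℙ)
          - (∫ ω, (1 / ((n : ℝ) * h n ^ d)) *
                ∑ i ∈ Finset.range n, KDEAux.phi cK h x₁ n (X i ω) ∂ℙ)
            * (∫ ω, (1 / ((n : ℝ) * h n ^ d)) *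
                ∑ i ∈ Finset.range n, KDEAux.phi cK h x₂ n (X i ω) ∂ℙ))
        = (A n - B n * Cc n) / h n ^ d := by
    intro n hn1
    rw [hsq n, hmean n x₁, hmean n x₂, ← hBdef n, ← hCcdef n]
    have hn0 : (n : ℝ) ≠ 0 := Nat.cast_ne_zero.mpr (by omega)
    have hh0 : h n ^ d ≠ 0 := by have := h_pos n; positivity
    field_simp
    ring
  -- bounds
  have hB_nonneg : ∀ (n : ℕ) (x : EuclideanSpace ℝ (Fin d)),
      0 ≤ ∫ y, KDEAux.phi cK h x n y ∂ν :=
    fun n x => integral_nonneg fun y => KDEAux.phi_nonneg hcK_pos.le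
  have hA_nonneg : ∀ n : ℕ, 0 ≤ A n := fun n =>
    integral_nonneg fun y => mul_nonneg (KDEAux.phi_nonneg hcK_pos.le)
      (KDEAux.phi_nonneg hcK_pos.le)
  have hB_le : ∀ (n : ℕ) (x : EuclideanSpace ℝ (Fin d)),
      ∫ y, KDEAux.phi cK h x n y ∂ν ≤ C * (cK * ((2 * π) ^ ((d : ℝ)/2) * h n ^ d)) := by
    intro n x
    have hhn := h_pos n
    calc ∫ y, KDEAux.phi cK h x n y ∂ν
        ≤ ∫ y, KDEAux.phi cK h x n y ∂((ENNReal.ofReal C) • volume) :=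
          integral_mono_measure hν_le
            (Eventually.of_forall fun y => KDEAux.phi_nonneg hcK_pos.le)
            ((KDEAux.phi_integrable hhn x).smul_measure ENNReal.ofReal_ne_top)
      _ = C * ∫ y, KDEAux.phi cK h x n y := by
          rw [integral_smul_measure, ENNReal.toReal_ofReal hC0, smul_eq_mul]
      _ = C * (cK * ((2 * π) ^ ((d : ℝ)/2) * h n ^ d)) := by
          rw [KDEAux.phi_integral hhn x]
  have hA_le : ∀ n : ℕ, A n ≤
      (C * (cK * cK * (4 * π) ^ ((d : ℝ)/2))) *
        rexp (-(‖x₁ - x₂‖^2) * (1/(8 * h n ^ 2))) * h n ^ d := by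
    intro n
    have hhn := h_pos n
    set en : ℝ := cK * rexp (-(‖x₁ - x₂‖^2) * (1/(8 * h n ^ 2))) with hen
    have hen_nonneg : 0 ≤ en := mul_nonneg hcK_pos.le (exp_nonneg _)
    set ψ : EuclideanSpace ℝ (Fin d) → ℝ :=
      fun y => cK * rexp (-(1/(4 * h n ^ 2)) * ‖x₁ - y‖ ^ 2) with hψ
    have hψ_int : Integrable ψ volume :=
      (gauss_integrable' (b := 1/(4 * h n ^ 2)) (by positivity) x₁).const_mul cK
    have hψ_nonneg : ∀ y, 0 ≤ ψ y := fun y => mul_nonneg hcK_pos.le (exp_nonneg _)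
    have hψ_integral : ∫ y, ψ y = cK * ((4 * π) ^ ((d : ℝ)/2) * h n ^ d) := by
      rw [hψ]
      rw [MeasureTheory.integral_const_mul,
        gauss_integral_scaled (s := 4) (by norm_num) hhn x₁]
    have hmaj : ∀ y, KDEAux.phi cK h x₁ n y * KDEAux.phi cK h x₂ n y ≤ en * ψ y := by
      intro y
      have := KDEAux.phi_mul_le hcK_pos.le hhn x₁ x₂ y
      calc KDEAux.phi cK h x₁ n y * KDEAux.phi cK h x₂ n y
          ≤ (cK * rexp (-(‖x₁ - x₂‖^2) * (1/(8 * h n ^ 2)))) *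
            (cK * rexp (-(1/(4 * h n ^ 2)) * ‖x₁ - y‖ ^ 2)) := this
        _ = en * ψ y := by rw [hen, hψ]
    have hprod_nonneg : ∀ y, 0 ≤ KDEAux.phi cK h x₁ n y * KDEAux.phi cK h x₂ n y :=
      fun y => mul_nonneg (KDEAux.phi_nonneg hcK_pos.le) (KDEAux.phi_nonneg hcK_pos.le)
    have hprod_int : Integrable
        (fun y => KDEAux.phi cK h x₁ n y * KDEAux.phi cK h x₂ n y) volume := by
      refine Integrable.mono (hψ_int.const_mul en)
        ((KDEAux.phi_cont x₁ n).mul (KDEAux.phi_cont x₂ n)).aestronglyMeasurable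
        (Eventually.of_forall fun y => ?_)
      rw [Real.norm_eq_abs, abs_of_nonneg (hprod_nonneg y), Real.norm_eq_abs,
        abs_of_nonneg (mul_nonneg hen_nonneg (hψ_nonneg y))]
      exact hmaj y
    calc A n ≤ ∫ y, KDEAux.phi cK h x₁ n y * KDEAux.phi cK h x₂ n y
            ∂((ENNReal.ofReal C) • volume) := by
          rw [hAdef n]
          exact integral_mono_measure hν_le
            (Eventually.of_forall fun y => hprod_nonneg y)
            (hprod_int.smul_measure ENNReal.ofReal_ne_top)
      _ = C * ∫ y, KDEAux.phi cK h x₁ n y * KDEAux.phi cK h x₂ n y := by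
          rw [integral_smul_measure, ENNReal.toReal_ofReal hC0, smul_eq_mul]
      _ ≤ C * (en * ∫ y, ψ y) := by
          refine mul_le_mul_of_nonneg_left ?_ hC0
          rw [← MeasureTheory.integral_const_mul]
          exact integral_mono hprod_int (hψ_int.const_mul en) hmaj
      _ = (C * (cK * cK * (4 * π) ^ ((d : ℝ)/2))) *
            rexp (-(‖x₁ - x₂‖^2) * (1/(8 * h n ^ 2))) * h n ^ d := by
          rw [hψ_integral, hen]; ring
  -- abs bound
  have habs : ∀ n : ℕ, |A n - B n * Cc n| ≤
      ((C * (cK * cK * (4 * π) ^ ((d : ℝ)/2))) * rexp (-(‖x₁ - x₂‖^2) * (1/(8 * h n ^ 2)))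
        + (C * (cK * (2 * π) ^ ((d : ℝ)/2)))^2 * h n ^ d) * h n ^ d := by
    intro n
    have hd_pos : (0:ℝ) < h n ^ d := pow_pos (h_pos n) d
    have h1 := hA_le n
    have h2 := hB_le n x₁
    have h3 := hB_le n x₂
    have h4 := hA_nonneg n
    have h5 := hB_nonneg n x₁
    have h6 := hB_nonneg n x₂
    rw [← hBdef n] at h2 h5
    rw [← hCcdef n] at h3 h6
    have hbc : B n * Cc n ≤ (C * (cK * ((2 * π) ^ ((d : ℝ)/2) * h n ^ d)))^2 := by
      rw [sq]
      exact mul_le_mul h2 h3 h6 (by positivity)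
    have he : (0:ℝ) ≤ rexp (-(‖x₁ - x₂‖^2) * (1/(8 * h n ^ 2))) := exp_nonneg _
    have hbc0 : 0 ≤ B n * Cc n := mul_nonneg h5 h6
    rw [abs_le]
    constructor <;> nlinarith [sq_nonneg (h n ^ d), mul_nonneg hC0 hcK_pos.le,
      mul_nonneg (mul_nonneg hC0 (mul_nonneg hcK_pos.le hcK_pos.le))
        (Real.rpow_nonneg (by positivity) ((d:ℝ)/2) : (0:ℝ) ≤ (4*π) ^ ((d:ℝ)/2))]
  -- the bound tends to zero
  have hδpos : (0:ℝ) < ‖x₁ - x₂‖ := norm_pos_iff.mpr (sub_ne_zero.mpr hx_ne)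
  have hexp0 : Tendsto (fun n => rexp (-(‖x₁ - x₂‖^2) * (1/(8 * h n ^ 2)))) atTop (nhds 0) := by
    have h8 : Tendsto (fun n => 8 * h n ^ 2) atTop (nhdsWithin 0 (Set.Ioi 0)) := by
      rw [tendsto_nhdsWithin_iff]
      constructor
      · have := (h_to_zero.pow 2).const_mul (8:ℝ)
        simpa using this
      · exact Eventually.of_forall fun n => by
          have := h_pos n
          simp only [Set.mem_Ioi]
          positivity
    have hinv : Tendsto (fun n => (8 * h n ^ 2)⁻¹) atTop atTop := h8.inv_tendsto_nhdsGT_zero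
    have hT : Tendsto (fun n => ‖x₁ - x₂‖^2 * (8 * h n ^ 2)⁻¹) atTop atTop :=
      hinv.const_mul_atTop (by positivity)
    have := Real.tendsto_exp_atBot.comp (tendsto_neg_atTop_atBot.comp hT)
    refine this.congr fun n => ?_
    simp [Function.comp, neg_mul, one_div]
  have hpow0 : Tendsto (fun n => h n ^ d) atTop (nhds 0) := by
    have := h_to_zero.pow d
    simpa [zero_pow (show d ≠ 0 by omega)] using this
  have hG : Tendsto (fun n =>
      ((C * (cK * cK * (4 * π) ^ ((d : ℝ)/2))) * rexp (-(‖x₁ - x₂‖^2) * (1/(8 * h n ^ 2)))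
        + (C * (cK * (2 * π) ^ ((d : ℝ)/2)))^2 * h n ^ d)) atTop (nhds 0) := by
    have := (hexp0.const_mul (C * (cK * cK * (4 * π) ^ ((d : ℝ)/2)))).add
      (hpow0.const_mul ((C * (cK * (2 * π) ^ ((d : ℝ)/2)))^2))
    simpa using this
  -- squeeze
  have hmain : Tendsto (fun n : ℕ => (A n - B n * Cc n) / h n ^ d) atTop (nhds 0) := by
    rw [tendsto_zero_iff_abs_tendsto_zero]
    refine squeeze_zero' (Eventually.of_forall fun n => abs_nonneg _)
      (Eventually.of_forall fun n => ?_) hG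
    show |(A n - B n * Cc n) / h n ^ d| ≤ _
    rw [abs_div, abs_of_pos (pow_pos (h_pos n) d), div_le_iff₀ (pow_pos (h_pos n) d)]
    exact habs n
  refine Tendsto.congr' ?_ hmain
  filter_upwards [eventually_ge_atTop 1] with n hn
  exact (key n hn).symm
end

section
/- Let A, S̄ : ℝ → B(H) be continuous families of operators with each S̄(t) self-adjoint. Let Π̄ : ℝ → B(H) be a differentiable family such that each Π̄(t) is self-adjoint and boundedly invertible, satisfying the operator Riccati equation Π̄'(t) = A(t)Π̄(t) + Π̄(t)A(t)* − Π̄(t)S̄(t)Π̄(t) for all t. Let p̃ : ℝ → H be differentiable with p̃'(t) = (A(t) − Π̄(t)S̄(t)) p̃(t) for all t. Then the Lyapunov functional V(t) = ⟨Π̄(t)⁻¹ p̃(t), p̃(t)⟩ is differentiable and satisfies d/dt V(t) = −⟨S̄(t) p̃(t), p̃(t)⟩ for all t. -/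
open ContinuousLinearMap
open scoped RealInnerProductSpace

/-- **Derivative of the Lyapunov functional** (used in the proof of Theorem 1).
If `Pb` solves the operator Riccati equation `Pb' = A Pb + Pb A* - Pb Sb Pb`,
each `Pb t` is self-adjoint and boundedly invertible (with inverse `Pbinv t`),
each `Sb t` is self-adjoint, and `p` solves the unforced error dynamics
`p' = (A - Pb Sb) p`, then `V(t) = ⟪Pb(t)⁻¹ p(t), p(t)⟫` is differentiable with
`V'(t) = -⟪Sb(t) p(t), p(t)⟫`. -/
theorem lyapunov_functional_derivative
    {H : Type*} [NormedAddCommGroup H] [InnerProductSpace ℝ H] [CompleteSpace H]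
    (A Sb Pb Pbinv : ℝ → H →L[ℝ] H)
    (hA_cont : Continuous A) (hSb_cont : Continuous Sb)
    (hSb_sa : ∀ t, adjoint (Sb t) = Sb t)
    (hPb_sa : ∀ t, adjoint (Pb t) = Pb t)
    (hPb_inv₁ : ∀ t, Pb t ∘L Pbinv t = 1)
    (hPb_inv₂ : ∀ t, Pbinv t ∘L Pb t = 1)
    (hPb_riccati : ∀ t, HasDerivAt Pb
      (A t ∘L Pb t + Pb t ∘L adjoint (A t) - Pb t ∘L (Sb t ∘L Pb t)) t)
    (p : ℝ → H)
    (hp : ∀ t, HasDerivAt p ((A t - Pb t ∘L Sb t) (p t)) t) :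
    ∀ t, HasDerivAt (fun τ => ⟪Pbinv τ (p τ), p τ⟫)
      (-⟪Sb t (p t), p t⟫) t := by
  intro t
  set P' := A t ∘L Pb t + Pb t ∘L adjoint (A t) - Pb t ∘L (Sb t ∘L Pb t) with hP'def
  have hu : ∀ τ, Pbinv τ = Ring.inverse (Pb τ) := fun τ =>
    (Ring.inverse_unit (⟨Pb τ, Pbinv τ, hPb_inv₁ τ, hPb_inv₂ τ⟩ : (H →L[ℝ] H)ˣ)).symm
  -- derivative of Pbinv
  have hinv : HasDerivAt Pbinv (-(Pbinv t ∘L (P' ∘L Pbinv t))) t := by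
    have h1 := (hasFDerivAt_ringInverse (𝕜 := ℝ)
      (⟨Pb t, Pbinv t, hPb_inv₁ t, hPb_inv₂ t⟩ : (H →L[ℝ] H)ˣ)).comp_hasDerivAt t
      (hPb_riccati t)
    have heq : Ring.inverse ∘ Pb = Pbinv := funext fun τ => (hu τ).symm
    rw [heq] at h1
    exact h1.congr_deriv rfl
  have hq : HasDerivAt (fun τ => Pbinv τ (p τ))
      ((-(Pbinv t ∘L (P' ∘L Pbinv t))) (p t) + Pbinv t ((A t - Pb t ∘L Sb t) (p t))) t :=
    hinv.clm_apply (hp t)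
  have hV := hq.inner ℝ (hp t)
  refine hV.congr_deriv ?_
  have hQ : Pbinv t ∘L Pb t = 1 := hPb_inv₂ t
  have hQ' : Pb t ∘L Pbinv t = 1 := hPb_inv₁ t
  have hsimp : Pbinv t ∘L (P' ∘L Pbinv t) =
      Pbinv t ∘L A t + adjoint (A t) ∘L Pbinv t - Sb t := by
    rw [hP'def]
    ext x
    simp only [comp_apply, add_apply, sub_apply, coe_comp', Function.comp_apply]
    have e0 : (Pb t) ((Pbinv t) x) = x := by
      have := congrArg (fun T => T x) hQ'; simpa using this
    have e1 : Pbinv t ((Pb t) ((adjoint (A t)) ((Pbinv t) x)))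
        = (adjoint (A t)) ((Pbinv t) x) := by
      have := congrArg (fun T => T ((adjoint (A t)) ((Pbinv t) x))) hQ
      simpa using this
    have e2 : Pbinv t ((Pb t) ((Sb t) x)) = (Sb t) x := by
      have := congrArg (fun T => T ((Sb t) x)) hQ
      simpa using this
    rw [map_sub, map_add, e0, e1, e2]
  rw [hsimp]
  set x := p t
  set Q := Pbinv t
  have hQsa : adjoint Q = Q := by
    have h0 : adjoint Q ∘L Pb t = 1 := by
      conv_lhs => rw [← hPb_sa t]
      rw [← ContinuousLinearMap.adjoint_comp, hQ']
      exact ContinuousLinearMap.adjoint_id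
    calc adjoint Q = adjoint Q ∘L (Pb t ∘L Q) := by
          rw [hQ']; ext y; simp
      _ = (adjoint Q ∘L Pb t) ∘L Q := by rw [comp_assoc]
      _ = Q := by rw [h0]; ext y; simp
  have hPbQ : Pb t (Q x) = x := by
    have := congrArg (fun T => T x) hQ'; simpa using this
  have hQPbS : Q ((Pb t) ((Sb t) x)) = Sb t x := by
    have := congrArg (fun T => T ((Sb t) x)) hQ; simpa using this
  simp only [sub_apply, add_apply, neg_apply, comp_apply, map_sub, map_add]
  rw [hQPbS]
  have i1 : ⟪Q x, (A t) x⟫ = ⟪(adjoint (A t)) (Q x), x⟫ :=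
    (ContinuousLinearMap.adjoint_inner_left _ _ _).symm
  have i2 : ⟪Q x, (Pb t) ((Sb t) x)⟫ = ⟪(Sb t) x, x⟫ := by
    rw [← hQsa, ContinuousLinearMap.adjoint_inner_left, hQPbS, real_inner_comm]
  rw [inner_sub_right, i1, i2]
  simp only [inner_add_left, inner_sub_left, inner_neg_left, inner_add_right, inner_sub_right]
  ring
end

section
/- Let A, S̄ : ℝ → B(H) be continuous families of operators with each S̄(t) self-adjoint, and let Π̄ : ℝ → B(H) be a differentiable family with each Π̄(t) self-adjoint and boundedly invertible, satisfying the operator Riccati equation Π̄'(t) = A(t)Π̄(t) + Π̄(t)A(t)* − Π̄(t)S̄(t)Π̄(t). Suppose there exist constants c₁, c₂ > 0 such that for all t: c₁I ≤ S̄(t) and c₁I ≤ Π̄(t)⁻¹ ≤ c₂I. Then the unforced estimation-error dynamics p̃'(t) = (A(t) − Π̄(t)S̄(t)) p̃(t) are uniformly exponentially stable: every differentiable solution p̃ satisfies, for all t₀ and all t ≥ t₀, ‖p̃(t)‖ ≤ √(c₂/c₁) · exp(−(c₁/(2c₂))(t − t₀)) · ‖p̃(t₀)‖. -/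
open ContinuousLinearMap
open scoped RealInnerProductSpace

/-- **Uniform exponential stability of the unforced suboptimal error dynamics**
(first statement of Theorem 1). If `Pb` solves the operator Riccati equation
`Pb' = A Pb + Pb A* - Pb Sb Pb`, each `Pb t` is self-adjoint and boundedly
invertible, each `Sb t` is self-adjoint, and `c₁ I ≤ Sb t`,
`c₁ I ≤ (Pb t)⁻¹ ≤ c₂ I` uniformly in `t`, then every solution of
`p' = (A - Pb Sb) p` satisfies
`‖p t‖ ≤ √(c₂/c₁) exp(-(c₁/(2c₂))(t - t₀)) ‖p t₀‖` for all `t ≥ t₀`. -/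
theorem suboptimal_error_dynamics_uniformly_exponentially_stable
    {H : Type*} [NormedAddCommGroup H] [InnerProductSpace ℝ H] [CompleteSpace H]
    (A Sb Pb Pbinv : ℝ → H →L[ℝ] H)
    (hA_cont : Continuous A) (hSb_cont : Continuous Sb)
    (hSb_sa : ∀ t, adjoint (Sb t) = Sb t)
    (hPb_sa : ∀ t, adjoint (Pb t) = Pb t)
    (hPb_inv₁ : ∀ t, Pb t ∘L Pbinv t = 1)
    (hPb_inv₂ : ∀ t, Pbinv t ∘L Pb t = 1)
    (hPb_riccati : ∀ t, HasDerivAt Pb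
      (A t ∘L Pb t + Pb t ∘L adjoint (A t) - Pb t ∘L (Sb t ∘L Pb t)) t)
    (c₁ c₂ : ℝ) (hc₁ : 0 < c₁) (hc₂ : 0 < c₂)
    (hSb_lb : ∀ t x, c₁ * ‖x‖ ^ 2 ≤ ⟪Sb t x, x⟫)
    (hPbinv_lb : ∀ t x, c₁ * ‖x‖ ^ 2 ≤ ⟪Pbinv t x, x⟫)
    (hPbinv_ub : ∀ t x, ⟪Pbinv t x, x⟫ ≤ c₂ * ‖x‖ ^ 2)
    (p : ℝ → H)
    (hp : ∀ t, HasDerivAt p ((A t - Pb t ∘L Sb t) (p t)) t) :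
    ∀ t₀ t, t₀ ≤ t →
      ‖p t‖ ≤ Real.sqrt (c₂ / c₁) * Real.exp (-(c₁ / (2 * c₂)) * (t - t₀)) * ‖p t₀‖ := by
  -- derivative of the inverse family
  set D : ℝ → H →L[ℝ] H := fun t =>
    A t ∘L Pb t + Pb t ∘L adjoint (A t) - Pb t ∘L (Sb t ∘L Pb t) with hD
  have hu : ∀ s, Pbinv s = Ring.inverse (Pb s) := by
    intro s
    simpa using (Ring.inverse_unit (Units.mk (Pb s) (Pbinv s) (hPb_inv₁ s) (hPb_inv₂ s))).symm
  have hPbinv_deriv : ∀ t, HasDerivAt Pbinv (-(Pbinv t * D t * Pbinv t)) t := by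
    intro t
    have h := (hasFDerivAt_ringInverse (𝕜 := ℝ)
        (Units.mk (Pb t) (Pbinv t) (hPb_inv₁ t) (hPb_inv₂ t))).comp_hasDerivAt t (hPb_riccati t)
    rw [funext hu]
    refine h.congr_deriv ?_
    simp [mulLeftRight_apply, hu]
    rfl
  -- simplify the derivative of the inverse
  have hPbinv_deriv' : ∀ t,
      HasDerivAt Pbinv (Sb t - Pbinv t * A t - adjoint (A t) * Pbinv t) t := by
    intro t
    have h1 : Pb t * Pbinv t = 1 := hPb_inv₁ t
    have h2 : ∀ x : H →L[ℝ] H, Pbinv t * (Pb t * x) = x := by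
      intro x; rw [← mul_assoc]
      have : Pbinv t * Pb t = 1 := hPb_inv₂ t
      rw [this, one_mul]
    have e : -(Pbinv t * D t * Pbinv t)
        = Sb t - Pbinv t * A t - adjoint (A t) * Pbinv t := by
      rw [hD]
      simp only [ContinuousLinearMap.coe_comp']  -- maybe unnecessary
      show -(Pbinv t * (A t * Pb t + Pb t * adjoint (A t) - Pb t * (Sb t * Pb t)) * Pbinv t) = _
      simp only [mul_add, mul_sub, add_mul, sub_mul, mul_assoc, h1, h2, mul_one, neg_sub]
      abel
    rw [← e]; exact hPbinv_deriv t
  -- the Lyapunov function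
  set V : ℝ → ℝ := fun t => ⟪Pbinv t (p t), p t⟫ with hV
  have hV_deriv : ∀ t, HasDerivAt V (-⟪Sb t (p t), p t⟫) t := by
    intro t
    have hf : HasDerivAt (fun s => Pbinv s (p s))
        ((Sb t - Pbinv t * A t - adjoint (A t) * Pbinv t) (p t)
          + Pbinv t ((A t - Pb t ∘L Sb t) (p t))) t :=
      (hPbinv_deriv' t).clm_apply (hp t)
    have h := (hf.inner ℝ (hp t))
    refine h.congr_deriv ?_
    set q := p t
    have e1 : ⟪Pbinv t q, Pb t (Sb t q)⟫ = ⟪Sb t q, q⟫ := by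
      rw [← adjoint_inner_left, hPb_sa]
      have : Pb t (Pbinv t q) = q := by
        have := hPb_inv₁ t
        calc Pb t (Pbinv t q) = (Pb t ∘L Pbinv t) q := rfl
          _ = q := by rw [this]; rfl
      rw [this, real_inner_comm]
    have e2 : ⟪adjoint (A t) (Pbinv t q), q⟫ = ⟪Pbinv t q, A t q⟫ := by
      rw [adjoint_inner_left]
    have e3 : Pbinv t (Pb t (Sb t q)) = Sb t q := by
      have := hPb_inv₂ t
      calc Pbinv t (Pb t (Sb t q)) = (Pbinv t ∘L Pb t) (Sb t q) := rfl
        _ = Sb t q := by rw [this]; rfl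
    simp only [ContinuousLinearMap.sub_apply, ContinuousLinearMap.add_apply,
      ContinuousLinearMap.mul_apply, ContinuousLinearMap.coe_comp', Function.comp_apply,
      map_sub, inner_sub_left, inner_sub_right, inner_add_left, e3]
    rw [e1, e2]
    ring
  -- Gronwall via antitonicity
  set k : ℝ := c₁ / c₂ with hk
  have hkpos : 0 < k := div_pos hc₁ hc₂
  set g : ℝ → ℝ := fun t => V t * Real.exp (k * t) with hg
  have hg_deriv : ∀ t, HasDerivAt g
      ((-⟪Sb t (p t), p t⟫) * Real.exp (k * t) + V t * (Real.exp (k * t) * k)) t := by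
    intro t
    have he : HasDerivAt (fun s => Real.exp (k * s)) (Real.exp (k * t) * k) t := by
      simpa using ((hasDerivAt_id t).const_mul k).exp
    exact (hV_deriv t).mul he
  have hg_anti : Antitone g := by
    apply antitone_of_hasDerivAt_nonpos hg_deriv
    intro t
    have h1 : c₁ * ‖p t‖ ^ 2 ≤ ⟪Sb t (p t), p t⟫ := hSb_lb t (p t)
    have h2 : V t ≤ c₂ * ‖p t‖ ^ 2 := hPbinv_ub t (p t)
    have hexp : 0 < Real.exp (k * t) := Real.exp_pos _
    have hkc : k * c₂ = c₁ := by rw [hk]; field_simp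
    have : V t * k ≤ ⟪Sb t (p t), p t⟫ := by nlinarith
    simp only [Pi.zero_apply]
    nlinarith
  intro t₀ t ht
  have hVle : V t ≤ V t₀ * Real.exp (-k * (t - t₀)) := by
    have := hg_anti ht
    have hexp : 0 < Real.exp (k * t) := Real.exp_pos _
    rw [hg] at this
    have : V t ≤ V t₀ * Real.exp (k * t₀) / Real.exp (k * t) := by
      rw [le_div_iff₀ hexp]; exact this
    calc V t ≤ V t₀ * Real.exp (k * t₀) / Real.exp (k * t) := this
      _ = V t₀ * Real.exp (-k * (t - t₀)) := by
          rw [mul_div_assoc, ← Real.exp_sub]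
          congr 2
          ring
  have hlb : c₁ * ‖p t‖ ^ 2 ≤ V t := hPbinv_lb t (p t)
  have hub : V t₀ ≤ c₂ * ‖p t₀‖ ^ 2 := hPbinv_ub t₀ (p t₀)
  have hexp : 0 < Real.exp (-k * (t - t₀)) := Real.exp_pos _
  have key : ‖p t‖ ^ 2 ≤ (c₂ / c₁) * Real.exp (-k * (t - t₀)) * ‖p t₀‖ ^ 2 := by
    rw [div_mul_eq_mul_div, div_mul_eq_mul_div, le_div_iff₀ hc₁]
    nlinarith
  -- convert to the stated form
  set E := Real.exp (-(c₁ / (2 * c₂)) * (t - t₀)) with hE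
  have hEpos : 0 < E := Real.exp_pos _
  have hE2 : E ^ 2 = Real.exp (-k * (t - t₀)) := by
    rw [hE, ← Real.exp_nat_mul]
    congr 1
    rw [hk]; field_simp
    ring
  have hsq : (Real.sqrt (c₂ / c₁)) ^ 2 = c₂ / c₁ :=
    Real.sq_sqrt (le_of_lt (div_pos hc₂ hc₁))
  have hRHS : 0 ≤ Real.sqrt (c₂ / c₁) * E * ‖p t₀‖ := by positivity
  have : ‖p t‖ ^ 2 ≤ (Real.sqrt (c₂ / c₁) * E * ‖p t₀‖) ^ 2 := by
    calc ‖p t‖ ^ 2 ≤ (c₂ / c₁) * Real.exp (-k * (t - t₀)) * ‖p t₀‖ ^ 2 := key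
      _ = (Real.sqrt (c₂ / c₁) * E * ‖p t₀‖) ^ 2 := by rw [mul_pow, mul_pow, hsq, hE2]
  calc ‖p t‖ = Real.sqrt (‖p t‖ ^ 2) := by rw [Real.sqrt_sq (norm_nonneg _)]
    _ ≤ Real.sqrt ((Real.sqrt (c₂ / c₁) * E * ‖p t₀‖) ^ 2) := Real.sqrt_le_sqrt this
    _ = Real.sqrt (c₂ / c₁) * E * ‖p t₀‖ := Real.sqrt_sq hRHS
end

section
/- Let A, S : ℝ → B(H) be continuous families of operators with each S(t) self-adjoint, and let Π : ℝ → B(H) be a differentiable family with each Π(t) self-adjoint and boundedly invertible, satisfying the operator Riccati equation Π'(t) = A(t)Π(t) + Π(t)A(t)* − Π(t)S(t)Π(t). Suppose there exist constants c₁, c₂ > 0 such that for all t: c₁I ≤ S(t) and c₁I ≤ Π(t)⁻¹ ≤ c₂I. Then the unforced optimal estimation-error dynamics p̃'(t) = (A(t) − Π(t)S(t)) p̃(t) are uniformly exponentially stable: every differentiable solution p̃ satisfies, for all t₀ and all t ≥ t₀, ‖p̃(t)‖ ≤ √(c₂/c₁) · exp(−(c₁/(2c₂))(t − t₀)) ·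 ‖p̃(t₀)‖. -/
open ContinuousLinearMap
open scoped RealInnerProductSpace

/-- **Uniform exponential stability of the unforced optimal error dynamics**
(established in the proof of Theorem 1 via the Lyapunov functional `V₂ = ⟪Π⁻¹p̃, p̃⟫`). If `P` solves the operator Riccati equation
`P' = A P + P A* - P S P`, each `P t` is self-adjoint and boundedly
invertible, each `S t` is self-adjoint, and `c₁ I ≤ S t`,
`c₁ I ≤ (P t)⁻¹ ≤ c₂ I` uniformly in `t`, then every solution of
`p' = (A - P S) p` satisfies
`‖p t‖ ≤ √(c₂/c₁) exp(-(c₁/(2c₂))(t - t₀)) ‖p t₀‖` for all `t ≥ t₀`. -/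
theorem optimal_error_dynamics_uniformly_exponentially_stable
    {H : Type*} [NormedAddCommGroup H] [InnerProductSpace ℝ H] [CompleteSpace H]
    (A S P Pinv : ℝ → H →L[ℝ] H)
    (hA_cont : Continuous A) (hS_cont : Continuous S)
    (hS_sa : ∀ t, adjoint (S t) = S t)
    (hP_sa : ∀ t, adjoint (P t) = P t)
    (hP_inv₁ : ∀ t, P t ∘L Pinv t = 1)
    (hP_inv₂ : ∀ t, Pinv t ∘L P t = 1)
    (hP_riccati : ∀ t, HasDerivAt P
      (A t ∘L P t + P t ∘L adjoint (A t) - P t ∘L (S t ∘L P t)) t)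
    (c₁ c₂ : ℝ) (hc₁ : 0 < c₁) (hc₂ : 0 < c₂)
    (hS_lb : ∀ t x, c₁ * ‖x‖ ^ 2 ≤ ⟪S t x, x⟫)
    (hPinv_lb : ∀ t x, c₁ * ‖x‖ ^ 2 ≤ ⟪Pinv t x, x⟫)
    (hPinv_ub : ∀ t x, ⟪Pinv t x, x⟫ ≤ c₂ * ‖x‖ ^ 2)
    (p : ℝ → H)
    (hp : ∀ t, HasDerivAt p ((A t - P t ∘L S t) (p t)) t) :
    ∀ t₀ t, t₀ ≤ t →
      ‖p t‖ ≤ Real.sqrt (c₂ / c₁) * Real.exp (-(c₁ / (2 * c₂)) * (t - t₀)) * ‖p t₀‖ := by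
  -- pointwise inverse identities
  have e1 : ∀ t (y : H), P t (Pinv t y) = y := by
    intro t y
    have := DFunLike.congr_fun (hP_inv₁ t) y
    simpa using this
  have e2 : ∀ t (y : H), Pinv t (P t y) = y := by
    intro t y
    have := DFunLike.congr_fun (hP_inv₂ t) y
    simpa using this
  -- derivative of Pinv
  have hQ' : ∀ t, HasDerivAt Pinv
      (S t - Pinv t ∘L A t - adjoint (A t) ∘L Pinv t) t := by
    intro t
    have hu : ∀ s, Ring.inverse (P s) = Pinv s := fun s =>
      Ring.inverse_unit (⟨P s, Pinv s, hP_inv₁ s, hP_inv₂ s⟩ : (H →L[ℝ] H)ˣ)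
    have h1 := (hasFDerivAt_ringInverse (𝕜 := ℝ)
        (⟨P t, Pinv t, hP_inv₁ t, hP_inv₂ t⟩ : (H →L[ℝ] H)ˣ)).comp_hasDerivAt t
        (hP_riccati t)
    have h2 : HasDerivAt (fun s => Ring.inverse (P s))
        (-(Pinv t ∘L ((A t ∘L P t + P t ∘L adjoint (A t) - P t ∘L (S t ∘L P t)) ∘L Pinv t))) t :=
      h1
    have h3 := h2.congr_of_eventuallyEq (Filter.Eventually.of_forall fun s => (hu s).symm)
    have key : -(Pinv t ∘L ((A t ∘L P t + P t ∘L adjoint (A t) - P t ∘L (S t ∘L P t)) ∘L Pinv t))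
        = S t - Pinv t ∘L A t - adjoint (A t) ∘L Pinv t := by
      ext x
      simp [comp_apply, map_add, map_sub, e1, e2]
      abel
    rwa [key] at h3
  -- the Lyapunov functional
  set V : ℝ → ℝ := fun s => ⟪Pinv s (p s), p s⟫ with hVdef
  have hVd : ∀ t, HasDerivAt V (-⟪S t (p t), p t⟫) t := by
    intro t
    have hf : HasDerivAt (fun s => Pinv s (p s))
        ((S t - Pinv t ∘L A t - adjoint (A t) ∘L Pinv t) (p t)
          + Pinv t ((A t - P t ∘L S t) (p t))) t := (hQ' t).clm_apply (hp t)
    have h := hf.inner ℝ (hp t)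
    have heq : ⟪Pinv t (p t), (A t - P t ∘L S t) (p t)⟫
        + ⟪(S t - Pinv t ∘L A t - adjoint (A t) ∘L Pinv t) (p t)
            + Pinv t ((A t - P t ∘L S t) (p t)), p t⟫
        = -⟪S t (p t), p t⟫ := by
      have hx1 : ⟪Pinv t (p t), (P t) ((S t) (p t))⟫ = ⟪S t (p t), p t⟫ := by
        conv_lhs => rw [← hP_sa t]
        rw [adjoint_inner_right, e1, real_inner_comm]
      have hx2 : ⟪adjoint (A t) (Pinv t (p t)), p t⟫ = ⟪Pinv t (p t), A t (p t)⟫ :=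
        adjoint_inner_left _ _ _
      simp only [sub_apply, comp_apply, map_sub, inner_sub_left, inner_add_left,
        inner_sub_right, e2]
      linarith [hx1, hx2]
    rw [← heq]
    exact h
  -- exponential decay of V
  set k : ℝ := c₁ / c₂ with hkdef
  have hk : 0 < k := div_pos hc₁ hc₂
  have hkc : k * c₂ = c₁ := div_mul_cancel₀ _ (ne_of_gt hc₂)
  have hg : ∀ t, HasDerivAt (fun s => V s * Real.exp (k * s))
      (-⟪S t (p t), p t⟫ * Real.exp (k * t) + V t * (Real.exp (k * t) * k)) t := by
    intro t
    have he : HasDerivAt (fun s => Real.exp (k * s)) (Real.exp (k * t) * k) t := by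
      have h1 : HasDerivAt (fun s : ℝ => k * s) k t := by
        simpa using (hasDerivAt_id t).const_mul k
      exact h1.exp
    exact (hVd t).mul he
  have hanti : Antitone (fun s => V s * Real.exp (k * s)) := by
    apply antitone_of_deriv_nonpos
    · exact fun s => ((hg s).differentiableAt)
    · intro t
      rw [(hg t).deriv]
      have he : (0:ℝ) < Real.exp (k * t) := Real.exp_pos _
      have h1 := hS_lb t (p t)
      have h2 := hPinv_ub t (p t)
      have hV : V t ≤ c₂ * ‖p t‖ ^ 2 := h2
      have step : V t * (Real.exp (k * t) * k) ≤ ⟪S t (p t), p t⟫ * Real.exp (k * t) := by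
        calc V t * (Real.exp (k * t) * k)
            ≤ (c₂ * ‖p t‖ ^ 2) * (Real.exp (k * t) * k) :=
              mul_le_mul_of_nonneg_right hV (by positivity)
          _ = (c₁ * ‖p t‖ ^ 2) * Real.exp (k * t) := by rw [← hkc]; ring
          _ ≤ ⟪S t (p t), p t⟫ * Real.exp (k * t) :=
              mul_le_mul_of_nonneg_right h1 he.le
      linarith
  intro t₀ t ht
  have hmono := hanti ht
  simp only at hmono
  have hVt : V t ≤ V t₀ * Real.exp (-k * (t - t₀)) := by
    have h := mul_le_mul_of_nonneg_right hmono (Real.exp_pos (-(k * t))).le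
    calc V t = V t * Real.exp (k * t) * Real.exp (-(k * t)) := by
          rw [mul_assoc, ← Real.exp_add]; simp
      _ ≤ V t₀ * Real.exp (k * t₀) * Real.exp (-(k * t)) := h
      _ = V t₀ * Real.exp (-k * (t - t₀)) := by
          rw [mul_assoc, ← Real.exp_add]; congr 2; ring
  have hlow : c₁ * ‖p t‖ ^ 2 ≤ V t := hPinv_lb t (p t)
  have hup : V t₀ ≤ c₂ * ‖p t₀‖ ^ 2 := hPinv_ub t₀ (p t₀)
  have hVt2 : V t ≤ c₂ * ‖p t₀‖ ^ 2 * Real.exp (-k * (t - t₀)) := by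
    have := mul_le_mul_of_nonneg_right hup (Real.exp_pos (-k * (t - t₀))).le
    linarith
  have hsq : ‖p t‖ ^ 2 ≤ (c₂ / c₁) * Real.exp (-k * (t - t₀)) * ‖p t₀‖ ^ 2 := by
    rw [div_mul_eq_mul_div, div_mul_eq_mul_div, le_div_iff₀ hc₁]
    nlinarith
  set R := Real.sqrt (c₂ / c₁) * Real.exp (-(c₁ / (2 * c₂)) * (t - t₀)) * ‖p t₀‖ with hR
  have hRnn : 0 ≤ R := by positivity
  have hR2 : R ^ 2 = (c₂ / c₁) * Real.exp (-k * (t - t₀)) * ‖p t₀‖ ^ 2 := by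
    rw [hR, mul_pow, mul_pow, Real.sq_sqrt (by positivity)]
    congr 1
    congr 1
    rw [← Real.exp_nat_mul]
    congr 1
    push_cast
    rw [hkdef]
    field_simp
  have : ‖p t‖ ^ 2 ≤ R ^ 2 := by rw [hR2]; exact hsq
  calc ‖p t‖ = Real.sqrt (‖p t‖ ^ 2) := (Real.sqrt_sq (norm_nonneg _)).symm
    _ ≤ Real.sqrt (R ^ 2) := Real.sqrt_le_sqrt this
    _ = R := Real.sqrt_sq hRnn
end
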